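/- Finite case of the volume formula: let R = F_q[G] for finite abelian G, and H₁, H₂ finite R[t]-modules that are free as R-modules, and γ : H₁ → H₂ an R-module isomorphism (not necessarily t-linear). Let t₁, t₂ denote the actions of t on H₁, H₂. Then det_{R[[T^{−1}]]}( (1 − (γ^{−1}t₂γ)T^{−1})(1 − t₁T^{−1})^{−1} | H₁ )|_{T=t} = |H₂|_G / |H₁|_G, where |H_i|_G is the monic generator of Fitt^0_{R[t]}(H_i), i.e. det(t·Id − t_i). -/

import Mathlib

private lemma aux_det_one_sub_smul {R : Type*} [CommRing R] {m : ℕ}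
    (M : Matrix (Fin m) (Fin m) R) :
    (1 - (HahnSeries.single (1 : ℤ) (1 : R) : LaurentSeries R) •
        M.map (algebraMap R (LaurentSeries R))).det
      = (HahnSeries.single (1 : ℤ) (1 : R) : LaurentSeries R) ^ m *
        Polynomial.aeval (HahnSeries.single (-1 : ℤ) (1 : R) : LaurentSeries R) M.charpoly := by
  set L := LaurentSeries R
  set u : L := HahnSeries.single (1 : ℤ) (1 : R)
  set ts : L := HahnSeries.single (-1 : ℤ) (1 : R)
  have hut : u * ts = 1 := by
    rw [HahnSeries.single_mul_single]
    norm_num [HahnSeries.single_zero_one]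
  have key : (1 : Matrix (Fin m) (Fin m) L) - u • M.map (algebraMap R L)
      = u • (ts • (1 : Matrix (Fin m) (Fin m) L) - M.map (algebraMap R L)) := by
    refine Matrix.ext fun i j => ?_
    by_cases h : i = j
    · subst h
      simp only [Matrix.sub_apply, Matrix.smul_apply, Matrix.one_apply_eq, smul_eq_mul,
        mul_sub, mul_one, ← mul_assoc, hut]
    · simp only [Matrix.sub_apply, Matrix.smul_apply, Matrix.one_apply_ne h, smul_eq_mul,
        mul_zero, zero_sub]
      exact (mul_neg u _).symm
  rw [key, Matrix.det_smul, Fintype.card_fin]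
  congr 1
  have h2 : (Polynomial.aeval ts) M.charpoly
      = (((Polynomial.aeval ts : Polynomial R →ₐ[R] L) : Polynomial R →+* L).mapMatrix
          (Matrix.charmatrix M)).det :=
    RingHom.map_det _ _
  rw [h2]
  congr 1
  ext i j
  by_cases h : i = j <;>
    simp [Matrix.charmatrix_apply, Matrix.diagonal, Matrix.one_apply, h, Polynomial.aeval_X,
      Polynomial.aeval_C, Algebra.smul_def, Matrix.algebraMap_matrix_apply]

set_option synthInstance.maxHeartbeats 1000000 in
/-- (Finite case of the volume formula.)  Let `R = F_q[G]` for a finite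
abelian group `G`, and `H₁, H₂` finite `R[t]`-modules (given as `R`-modules with the
`R`-linear endomorphisms `t₁, t₂` describing the `t`-action), free of rank `m` over `R`
with bases `b₁, b₂`, and let `γ : H₁ ≅ H₂` be an `R`-module isomorphism (not necessarily
`t`-linear).  Then, in `F_q((t⁻¹))[G] = (F_q[G])((t⁻¹))` (Laurent series in `u = t⁻¹`,
with `t = single (−1) 1`), the nuclear determinant
`det((1 − (γ⁻¹t₂γ)T⁻¹)(1 − t₁T⁻¹)⁻¹ | H₁)` evaluated at `T = t` equals
`|H₂|_G / |H₁|_G = det(t·Id − t₂)·det(t·Id − t₁)⁻¹`. -/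
theorem stmt_19 {Fq G : Type*} [Field Fq] [Fintype Fq] [CommGroup G] [Finite G]
    {H₁ H₂ : Type*} [AddCommGroup H₁] [Module (MonoidAlgebra Fq G) H₁]
    [AddCommGroup H₂] [Module (MonoidAlgebra Fq G) H₂] [Finite H₁] [Finite H₂]
    {m : ℕ} (b₁ : Module.Basis (Fin m) (MonoidAlgebra Fq G) H₁)
    (b₂ : Module.Basis (Fin m) (MonoidAlgebra Fq G) H₂)
    (t₁ : H₁ →ₗ[MonoidAlgebra Fq G] H₁) (t₂ : H₂ →ₗ[MonoidAlgebra Fq G] H₂)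
    (γ : H₁ ≃ₗ[MonoidAlgebra Fq G] H₂) :
    (letI R := MonoidAlgebra Fq G
     letI L := LaurentSeries R
     letI u : L := HahnSeries.single (1 : ℤ) (1 : R)
     letI ts : L := HahnSeries.single (-1 : ℤ) (1 : R)
     Matrix.det
        ((1 - u • (LinearMap.toMatrix b₁ b₁
            (γ.symm.toLinearMap ∘ₗ t₂ ∘ₗ γ.toLinearMap)).map (algebraMap R L)) *
          Ring.inverse (1 - u • (LinearMap.toMatrix b₁ b₁ t₁).map (algebraMap R L)))
      = Polynomial.aeval ts (LinearMap.toMatrix b₂ b₂ t₂).charpoly *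
          Ring.inverse (Polynomial.aeval ts (LinearMap.toMatrix b₁ b₁ t₁).charpoly)) := by
  set R := MonoidAlgebra Fq G with hR
  set L := LaurentSeries R with hL
  set u : L := HahnSeries.single (1 : ℤ) (1 : R) with hu
  set ts : L := HahnSeries.single (-1 : ℤ) (1 : R) with hts
  haveI : Module.Finite R H₁ := Module.Finite.of_basis b₁
  haveI : Module.Free R H₁ := Module.Free.of_basis b₁
  haveI : Module.Finite R H₂ := Module.Finite.of_basis b₂
  haveI : Module.Free R H₂ := Module.Free.of_basis b₂
  have hut : u * ts = 1 := by
    rw [hu, hts, HahnSeries.single_mul_single]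
    norm_num [HahnSeries.single_zero_one]
  have hutm : u ^ m * ts ^ m = 1 := by rw [← mul_pow, hut, one_pow]
  have hU : IsUnit (u ^ m) := IsUnit.of_mul_eq_one _ hutm
  have hinv : Ring.inverse (u ^ m) = ts ^ m := by
    calc Ring.inverse (u ^ m) = ts ^ m * u ^ m * Ring.inverse (u ^ m) := by
          rw [mul_comm (ts ^ m), hutm, one_mul]
      _ = ts ^ m * (u ^ m * Ring.inverse (u ^ m)) := by rw [mul_assoc]
      _ = ts ^ m := by rw [Ring.mul_inverse_cancel _ hU, mul_one]
  have hc : (LinearMap.toMatrix b₁ b₁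
        (γ.symm.toLinearMap ∘ₗ t₂ ∘ₗ γ.toLinearMap)).charpoly
      = (LinearMap.toMatrix b₂ b₂ t₂).charpoly := by
    have hconj : γ.symm.toLinearMap ∘ₗ t₂ ∘ₗ γ.toLinearMap = γ.symm.conj t₂ := by
      ext x; simp [LinearEquiv.conj_apply]
    rw [LinearMap.charpoly_toMatrix, LinearMap.charpoly_toMatrix, hconj,
      LinearEquiv.charpoly_conj]
  show Matrix.det
        ((1 - u • (LinearMap.toMatrix b₁ b₁
            (γ.symm.toLinearMap ∘ₗ t₂ ∘ₗ γ.toLinearMap)).map (algebraMap R L)) *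
          Ring.inverse (1 - u • (LinearMap.toMatrix b₁ b₁ t₁).map (algebraMap R L)))
      = Polynomial.aeval ts (LinearMap.toMatrix b₂ b₂ t₂).charpoly *
          Ring.inverse (Polynomial.aeval ts (LinearMap.toMatrix b₁ b₁ t₁).charpoly)
  rw [← Matrix.nonsing_inv_eq_ringInverse, Matrix.det_mul, Matrix.det_nonsing_inv,
    aux_det_one_sub_smul, aux_det_one_sub_smul, hc, Ring.mul_inverse_rev, hinv]
  set P₁ : L := Polynomial.aeval ts (LinearMap.toMatrix b₁ b₁ t₁).charpoly
  set P₂ : L := Polynomial.aeval ts (LinearMap.toMatrix b₂ b₂ t₂).charpoly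
  calc u ^ m * P₂ * (Ring.inverse P₁ * ts ^ m)
      = u ^ m * ts ^ m * (P₂ * Ring.inverse P₁) := by ring
    _ = P₂ * Ring.inverse P₁ := by rw [hutm, one_mul]
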